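/- (Corollary 4.3.) Let 0 < α < 1, C > 0, r > 0 and n ∈ ℕ with n ≥ 1. Let g : (0,∞) → [0,∞) be measurable and satisfy ∫₀^∞ e^{−λt} g(t) dt = (1 + C Γ(1−α) λ^α)^{−(r+n)} for all λ > 0. Then ∫₀^∞ t^{−nα} g(t) dt = Γ(n+1) / ( Γ(nα+1) (C Γ(1−α))^n r^{[n]} ), where r^{[n]} := r(r+1)⋯(r+n−1). -/

import Mathlib

open MeasureTheory Set Finset Real Filter

lemma aux_int (m : ℕ) (c : ℝ) (h : (m:ℝ) + 1 < c) :
    IntegrableOn (fun z : ℝ => z ^ m * (1+z) ^ (-c)) (Ioi 0) := by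
  have hc : (0:ℝ) < c := lt_of_le_of_lt (by positivity) h
  have hmeas : Measurable (fun z : ℝ => z ^ m * (1+z) ^ (-c)) := by fun_prop
  have h1 : IntegrableOn (fun z : ℝ => z ^ m * (1+z) ^ (-c)) (Ioc 0 1) := by
    refine Integrable.mono' (integrable_const 1) hmeas.aestronglyMeasurable ?_
    filter_upwards [ae_restrict_mem measurableSet_Ioc] with z hz
    have hz0 : (0:ℝ) < z := hz.1
    have : z ^ m * (1+z) ^ (-c) ≤ 1 := by
      have h1 : z ^ m ≤ 1 := pow_le_one₀ hz0.le hz.2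
      have h2 : (1+z) ^ (-c) ≤ 1 :=
        Real.rpow_le_one_of_one_le_of_nonpos (by linarith) (by linarith)
      calc z ^ m * (1+z) ^ (-c) ≤ 1 * 1 := by
            apply mul_le_mul h1 h2 (by positivity) zero_le_one
        _ = 1 := by ring
    rw [Real.norm_eq_abs, abs_of_nonneg (by positivity)]
    exact this
  have h2 : IntegrableOn (fun z : ℝ => z ^ m * (1+z) ^ (-c)) (Ioi 1) := by
    refine Integrable.mono' (integrableOn_Ioi_rpow_of_lt (a := (m:ℝ) - c) (by linarith) zero_lt_one)
      hmeas.aestronglyMeasurable ?_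
    filter_upwards [ae_restrict_mem measurableSet_Ioi] with z hz
    have hz0 : (0:ℝ) < z := lt_trans zero_lt_one hz
    rw [Real.norm_eq_abs, abs_of_nonneg (by positivity)]
    have h2 : (1+z) ^ (-c) ≤ z ^ (-c) :=
      Real.rpow_le_rpow_of_nonpos hz0 (by linarith) (by linarith)
    calc z ^ m * (1+z) ^ (-c) ≤ z ^ (m:ℝ) * z ^ (-c) := by
          rw [Real.rpow_natCast]; exact mul_le_mul_of_nonneg_left h2 (by positivity)
      _ = z ^ ((m:ℝ) - c) := by rw [← Real.rpow_add hz0]; ring_nf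
  have : Ioi (0:ℝ) = Set.Ioc 0 1 ∪ Set.Ioi 1 := (Ioc_union_Ioi_eq_Ioi zero_le_one).symm
  rw [this]; exact h1.union h2

lemma aux_base (b : ℝ) (hb : 0 < b) :
    ∫ z in Ioi (0:ℝ), (1+z) ^ (-(b+1)) = 1/b := by
  have key : ∫ z in Ioi (0:ℝ), (1+z) ^ (-(b+1)) = 0 - (-((1+(0:ℝ))^(-b)/b)) := by
    refine integral_Ioi_of_hasDerivAt_of_tendsto' (f := fun z => -((1+z)^(-b)/b)) ?_ ?_ ?_
    · intro x hx
      have h1x : (0:ℝ) < 1 + x := by simp only [Set.mem_Ici] at hx; linarith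
      have d1 : HasDerivAt (fun z : ℝ => 1 + z) 1 x := (hasDerivAt_id x).const_add 1
      have d2 : HasDerivAt (fun z : ℝ => (1+z)^(-b)) (-b * (1+x)^(-b-1) * 1) x :=
        (Real.hasDerivAt_rpow_const (p := -b) (Or.inl h1x.ne')).comp x d1
      have d3 := (d2.div_const b).neg
      convert d3 using 1
      · rfl
      rw [show -b-1 = -(b+1) by ring]
      field_simp
    · have := aux_int 0 (b+1) (by push_cast; linarith)
      simpa using this
    · have h1 : Tendsto (fun z : ℝ => 1 + z) atTop atTop :=
        tendsto_atTop_add_const_left atTop 1 tendsto_id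
      have h2 : Tendsto (fun z : ℝ => (1+z)^(-b)) atTop (nhds 0) :=
        (tendsto_rpow_neg_atTop hb).comp h1
      have := (h2.div_const b).neg
      simpa using this
  rw [key]
  norm_num

lemma aux_beta (b : ℝ) (hb : 0 < b) : ∀ m : ℕ,
    ∫ z in Ioi (0:ℝ), z ^ m * (1+z) ^ (-(b+m+1))
      = (m.factorial : ℝ) / ∏ i ∈ Finset.range (m+1), (b+i) := by
  intro m
  induction m with
  | zero => simpa using aux_base b hb
  | succ m ih =>
    have key : ∫ z in Ioi (0:ℝ),
        ((m+1:ℝ) * (z ^ m * (1+z) ^ (-(b+m+1))) - (b+m+1) * (z ^ (m+1) * (1+z) ^ (-(b+(m+1)+1))))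
        = 0 - ((0:ℝ) ^ (m+1) * (1+(0:ℝ))^(-(b+m+1))) := by
      refine integral_Ioi_of_hasDerivAt_of_tendsto'
        (f := fun z => z ^ (m+1) * (1+z)^(-(b+m+1))) ?_ ?_ ?_
      · intro x hx
        have h1x : (0:ℝ) < 1 + x := by simp only [Set.mem_Ici] at hx; linarith
        have d1 : HasDerivAt (fun z : ℝ => z ^ (m+1)) ((m+1 : ℝ) * x ^ m) x := by
          simpa using hasDerivAt_pow (m+1) x
        have d2 : HasDerivAt (fun z : ℝ => (1+z)^(-(b+m+1)))
            (-(b+m+1) * (1+x)^(-(b+m+1)-1) * 1) x :=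
          (Real.hasDerivAt_rpow_const (p := -(b+m+1)) (Or.inl h1x.ne')).comp x
            ((hasDerivAt_id x).const_add 1)
        have d3 := d1.mul d2
        convert d3 using 1
        · rfl
        · rfl
        rw [show -(b+m+1)-1 = -(b+(m+1)+1) by push_cast; ring]
        push_cast
        ring
      · apply Integrable.sub
        · have := (aux_int m (b+m+1) (by linarith)).const_mul (m+1:ℝ)
          simpa [mul_assoc] using this
        · exact (aux_int (m+1) (b+(m+1)+1) (by push_cast; linarith)).const_mul (b+m+1)
      · have hbd : ∀ z : ℝ, 0 ≤ z → z ^ (m+1) * (1+z)^(-(b+m+1)) ≤ (1+z)^(-b) := by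
          intro z hz
          have h1z : (0:ℝ) < 1 + z := by linarith
          calc z ^ (m+1) * (1+z)^(-(b+m+1))
              ≤ (1+z) ^ (m+1) * (1+z)^(-(b+m+1)) := by
                apply mul_le_mul_of_nonneg_right (pow_le_pow_left₀ hz (by linarith) _)
                positivity
            _ = (1+z) ^ ((m+1:ℕ):ℝ) * (1+z)^(-(b+m+1)) := by
                rw [Real.rpow_natCast (1+z) (m+1)]
            _ = (1+z) ^ (((m+1:ℕ):ℝ) + -(b+m+1)) := by rw [← Real.rpow_add h1z]
            _ = (1+z) ^ (-b) := by push_cast; ring_nf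
        have h1 : Tendsto (fun z : ℝ => (1+z)^(-b)) atTop (nhds 0) :=
          (tendsto_rpow_neg_atTop hb).comp (tendsto_atTop_add_const_left atTop 1 tendsto_id)
        refine squeeze_zero' ?_ ?_ h1
        · filter_upwards [eventually_ge_atTop (0:ℝ)] with z hz
          positivity
        · filter_upwards [eventually_ge_atTop (0:ℝ)] with z hz
          exact hbd z hz
    have hI1 := aux_int m (b+m+1) (by linarith)
    have hI2 := aux_int (m+1) (b+(m+1)+1) (by push_cast; linarith)
    rw [integral_sub (hI1.const_mul ((m:ℝ)+1)) (hI2.const_mul (b+m+1)),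
        integral_const_mul, integral_const_mul] at key
    have h0 : (0:ℝ) ^ (m+1) * (1+(0:ℝ))^(-(b+m+1)) = 0 := by simp
    rw [h0] at key
    have key2 : (m+1:ℝ) * ∫ z in Ioi (0:ℝ), z ^ m * (1+z) ^ (-(b+m+1))
        = (b+m+1) * ∫ z in Ioi (0:ℝ), z ^ (m+1) * (1+z) ^ (-(b+(m+1)+1)) := by
      linarith
    rw [ih] at key2
    have hprod : (0:ℝ) < ∏ i ∈ Finset.range (m+1), (b+i) := by
      apply Finset.prod_pos; intro i _; positivity
    have hbm : (0:ℝ) < b + m + 1 := by positivity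
    rw [Finset.prod_range_succ]
    push_cast [Nat.factorial_succ]
    set I := ∫ z in Ioi (0:ℝ), z ^ (m+1) * (1+z) ^ (-(b+((m:ℝ)+1)+1)) with hIdef
    rw [eq_div_iff (by positivity)]
    have key3 : ((m:ℝ)+1) * m.factorial = (b+(m:ℝ)+1) * I * ∏ i ∈ Finset.range (m+1), (b+i) := by
      field_simp at key2
      linarith
    linear_combination -key3

lemma aux_scaled (m : ℕ) (b K : ℝ) (hb : 0 < b) (hK : 0 < K) :
    ∫ y in Ioi (0:ℝ), y ^ m * (1+K*y) ^ (-(b+m+1))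
      = K⁻¹^(m+1) * ((m.factorial:ℝ) / ∏ i ∈ Finset.range (m+1), (b+i)) := by
  have h := integral_comp_mul_left_Ioi (fun z => (K⁻¹*z)^m * (1+z)^(-(b+m+1))) 0 hK
  simp only [mul_zero, inv_mul_cancel_left₀ hK.ne'] at h
  rw [h, smul_eq_mul]
  have : ∫ z in Ioi (0:ℝ), (K⁻¹*z)^m * (1+z)^(-(b+m+1))
      = K⁻¹^m * ∫ z in Ioi (0:ℝ), z^m * (1+z)^(-(b+m+1)) := by
    rw [← integral_const_mul]
    congr 1; ext z; rw [mul_pow]; ring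
  rw [this, aux_beta b hb m, pow_succ]
  ring

lemma aux_subst (α K b : ℝ) (hα : 0 < α) (hK : 0 < K) (m : ℕ) (hb : 0 < b) :
    ∫ l in Ioi (0:ℝ), l ^ ((m+1)*α - 1) * (1+K*l^α) ^ (-(b+m+1))
      = α⁻¹ * (K⁻¹^(m+1) * ((m.factorial:ℝ) / ∏ i ∈ Finset.range (m+1), (b+i))) := by
  have h := integral_comp_rpow_Ioi_of_pos
    (g := fun y => y ^ (m:ℝ) * (1+K*y)^(-(b+m+1))) hα
  have h1 : ∫ x in Ioi (0:ℝ), (α * x ^ (α - 1)) •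
        ((x^α) ^ (m:ℝ) * (1+K*x^α)^(-(b+m+1)))
      = α * ∫ l in Ioi (0:ℝ), l ^ ((m+1)*α - 1) * (1+K*l^α) ^ (-(b+m+1)) := by
    rw [← integral_const_mul]
    refine setIntegral_congr_fun measurableSet_Ioi (fun x hx => ?_)
    have hx0 : (0:ℝ) < x := hx
    rw [smul_eq_mul]
    have e1 : (x^α)^(m:ℝ) = x^((m:ℝ)*α) := by rw [← Real.rpow_mul hx0.le, mul_comm]
    rw [e1]
    calc (α * x^(α-1)) * (x^((m:ℝ)*α) * (1+K*x^α)^(-(b+m+1)))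
        = α * ((x^(α-1) * x^((m:ℝ)*α)) * (1+K*x^α)^(-(b+m+1))) := by ring
      _ = α * (x^((m+1)*α-1) * (1+K*x^α)^(-(b+m+1))) := by
          rw [← Real.rpow_add hx0, show α-1+(m:ℝ)*α = ((m:ℝ)+1)*α-1 by ring]
  have h2 : ∫ y in Ioi (0:ℝ), y ^ (m:ℝ) * (1+K*y)^(-(b+m+1))
      = ∫ y in Ioi (0:ℝ), y ^ m * (1+K*y)^(-(b+m+1)) := by
    refine setIntegral_congr_fun measurableSet_Ioi (fun y hy => ?_)
    rw [Real.rpow_natCast]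
  rw [h1, h2, aux_scaled m b K hb hK] at h
  rw [← h]
  field_simp


lemma aux_L2 (α K R s : ℝ) (hα : 0 < α) (hK : 0 < K) (hs : 0 < s) (hR : 0 < R)
    (hsR : s < α * R) :
    IntegrableOn (fun l : ℝ => l ^ (s - 1) * (1+K*l^α) ^ (-R)) (Ioi 0) := by
  have hmeas : Measurable (fun l : ℝ => l ^ (s - 1) * (1+K*l^α) ^ (-R)) := by fun_prop
  have h1 : IntegrableOn (fun l : ℝ => l ^ (s - 1) * (1+K*l^α) ^ (-R)) (Ioc 0 1) := by
    have hbase : IntegrableOn (fun l : ℝ => l ^ (s-1)) (Ioc 0 1) := by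
      have := intervalIntegral.intervalIntegrable_rpow' (a := 0) (b := 1) (r := s-1)
        (by linarith)
      rwa [intervalIntegrable_iff_integrableOn_Ioc_of_le zero_le_one] at this
    refine Integrable.mono' hbase hmeas.aestronglyMeasurable ?_
    filter_upwards [ae_restrict_mem measurableSet_Ioc] with l hl
    have hl0 : (0:ℝ) < l := hl.1
    rw [Real.norm_eq_abs, abs_of_nonneg (by positivity)]
    have hb : (1+K*l^α) ^ (-R) ≤ 1 :=
      Real.rpow_le_one_of_one_le_of_nonpos (by nlinarith [Real.rpow_pos_of_pos hl0 α])
        (by linarith)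
    calc l ^ (s-1) * (1+K*l^α) ^ (-R) ≤ l ^ (s-1) * 1 :=
          mul_le_mul_of_nonneg_left hb (by positivity)
      _ = l ^ (s-1) := by ring
  have h2 : IntegrableOn (fun l : ℝ => l ^ (s - 1) * (1+K*l^α) ^ (-R)) (Ioi 1) := by
    have he : s - 1 + α * (-R) < -1 := by nlinarith
    have hbase : IntegrableOn (fun l : ℝ => K ^ (-R) * l ^ (s - 1 + α * (-R))) (Ioi 1) :=
      (integrableOn_Ioi_rpow_of_lt he zero_lt_one).const_mul _
    refine Integrable.mono' hbase hmeas.aestronglyMeasurable ?_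
    filter_upwards [ae_restrict_mem measurableSet_Ioi] with l hl
    have hl0 : (0:ℝ) < l := lt_trans zero_lt_one hl
    have hlα : (0:ℝ) < l ^ α := Real.rpow_pos_of_pos hl0 α
    rw [Real.norm_eq_abs, abs_of_nonneg (by positivity)]
    have hb : (1+K*l^α) ^ (-R) ≤ (K*l^α) ^ (-R) :=
      Real.rpow_le_rpow_of_nonpos (by positivity) (by linarith) (by linarith)
    have he2 : (K*l^α) ^ (-R) = K ^ (-R) * l ^ (α * (-R)) := by
      rw [Real.mul_rpow hK.le hlα.le, ← Real.rpow_mul hl0.le]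
    calc l ^ (s-1) * (1+K*l^α) ^ (-R) ≤ l ^ (s-1) * (K ^ (-R) * l ^ (α * (-R))) := by
          rw [he2] at hb
          exact mul_le_mul_of_nonneg_left hb (by positivity)
      _ = K ^ (-R) * l ^ (s - 1 + α * (-R)) := by
          rw [Real.rpow_add hl0]; ring
  have : Ioi (0:ℝ) = Set.Ioc 0 1 ∪ Set.Ioi 1 := (Ioc_union_Ioi_eq_Ioi zero_le_one).symm
  rw [this]; exact h1.union h2

/-- Corollary 4.3: if `g` has Laplace transform `(1 + CΓ(1-α)λ^α)^{-(r+n)}`, then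
`∫₀^∞ t^{-nα} g(t) dt = Γ(n+1)/(Γ(nα+1)(CΓ(1-α))^n r^{[n]})`. -/
theorem negative_moment_of_negBinomial_stable_sum
    (α C r : ℝ) (hα : 0 < α) (hα1 : α < 1) (hC : 0 < C) (hr : 0 < r)
    (n : ℕ) (hn : 1 ≤ n)
    (g : ℝ → ℝ) (hg_meas : Measurable g) (hg_nonneg : ∀ x > (0 : ℝ), 0 ≤ g x)
    (hg_laplace : ∀ l > (0 : ℝ),
      ∫ x in Ioi (0 : ℝ), Real.exp (-l * x) * g x
        = (1 + C * Real.Gamma (1 - α) * l ^ α) ^ (-(r + n))) :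
    ∫ x in Ioi (0 : ℝ), x ^ (-(n * α)) * g x
      = Real.Gamma (n + 1)
        / (Real.Gamma (n * α + 1) * (C * Real.Gamma (1 - α)) ^ n
            * ∏ i ∈ Finset.range n, (r + i)) := by
  have hΓ1α : 0 < Real.Gamma (1 - α) := Real.Gamma_pos_of_pos (by linarith)
  set K := C * Real.Gamma (1 - α) with hK_def
  have hK : 0 < K := mul_pos hC hΓ1α
  have hn1 : (1:ℝ) ≤ (n:ℝ) := by exact_mod_cast hn
  set s := (n:ℝ) * α with hs_def
  have hs : 0 < s := mul_pos (by linarith) hα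
  have hR : 0 < r + (n:ℝ) := by linarith
  have hsR : s < α * (r + (n:ℝ)) := by
    rw [hs_def]; nlinarith
  have hΓs : 0 < Real.Gamma s := Real.Gamma_pos_of_pos hs
  -- Step 1: laplace transform as lintegral
  have hint : ∀ l > (0:ℝ), IntegrableOn (fun x => Real.exp (-l * x) * g x) (Ioi 0) := by
    intro l hl
    by_contra hcon
    have h0 := integral_undef hcon
    rw [hg_laplace l hl] at h0
    have hpos : (0:ℝ) < (1 + K * l ^ α) ^ (-(r + (n:ℝ))) := by
      apply Real.rpow_pos_of_pos
      nlinarith [Real.rpow_pos_of_pos hl α]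
    exact absurd h0.symm (ne_of_lt hpos)
  have hnn_lap : ∀ l : ℝ, 0 ≤ᵐ[volume.restrict (Ioi (0:ℝ))] fun x => Real.exp (-l * x) * g x := by
    intro l
    filter_upwards [ae_restrict_mem measurableSet_Ioi] with x hx
    exact mul_nonneg (Real.exp_nonneg _) (hg_nonneg x hx)
  have hlap_lint : ∀ l > (0:ℝ), ∫⁻ x in Ioi (0:ℝ), ENNReal.ofReal (Real.exp (-l * x) * g x)
      = ENNReal.ofReal ((1 + K * l ^ α) ^ (-(r + (n:ℝ)))) := by
    intro l hl
    rw [← ofReal_integral_eq_lintegral_ofReal (hint l hl) (hnn_lap l), hg_laplace l hl]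
  -- Step 2: Gamma integral as lintegral
  have hgamma : ∀ x > (0:ℝ), ∫⁻ l in Ioi (0:ℝ), ENNReal.ofReal (l ^ (s-1) * Real.exp (-x * l))
      = ENNReal.ofReal (x ^ (-s) * Real.Gamma s) := by
    intro x hx
    have hint2 : IntegrableOn (fun l : ℝ => l ^ (s-1) * Real.exp (-x * l)) (Ioi 0) := by
      have := integrableOn_rpow_mul_exp_neg_mul_rpow (s := s-1) (p := 1) (b := x)
        (by linarith) zero_lt_one hx
      simpa [Real.rpow_one] using this
    rw [← ofReal_integral_eq_lintegral_ofReal hint2 ?_]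
    · congr 1
      have := Real.integral_rpow_mul_exp_neg_mul_Ioi hs hx
      simp only [neg_mul] at this ⊢
      rw [this, one_div, Real.inv_rpow hx.le, ← Real.rpow_neg hx.le]
    · filter_upwards [ae_restrict_mem measurableSet_Ioi] with l hl
      exact mul_nonneg (Real.rpow_nonneg hl.le _) (Real.exp_nonneg _)
  -- measurability facts
  have hmeasL : Measurable fun x : ℝ => ENNReal.ofReal (x ^ (-s) * g x) := by fun_prop
  set L := ∫⁻ x in Ioi (0:ℝ), ENNReal.ofReal (x ^ (-s) * g x) with hL_def
  -- claim 1
  have claim1 : ∫⁻ x in Ioi (0:ℝ), ∫⁻ l in Ioi (0:ℝ),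
        ENNReal.ofReal (l ^ (s-1) * Real.exp (-x * l) * g x)
      = L * ENNReal.ofReal (Real.Gamma s) := by
    rw [hL_def, ← lintegral_mul_const _ hmeasL]
    refine setLIntegral_congr_fun measurableSet_Ioi (fun x hx => ?_)
    have hgx : 0 ≤ g x := hg_nonneg x hx
    calc ∫⁻ l in Ioi (0:ℝ), ENNReal.ofReal (l ^ (s-1) * Real.exp (-x * l) * g x)
        = ∫⁻ l in Ioi (0:ℝ),
            ENNReal.ofReal (l ^ (s-1) * Real.exp (-x * l)) * ENNReal.ofReal (g x) := by
          refine lintegral_congr fun l => ?_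
          rw [ENNReal.ofReal_mul' hgx]
      _ = (∫⁻ l in Ioi (0:ℝ), ENNReal.ofReal (l ^ (s-1) * Real.exp (-x * l)))
            * ENNReal.ofReal (g x) := lintegral_mul_const _ (by fun_prop)
      _ = ENNReal.ofReal (x ^ (-s) * Real.Gamma s) * ENNReal.ofReal (g x) := by
          rw [hgamma x hx]
      _ = ENNReal.ofReal (x ^ (-s) * g x) * ENNReal.ofReal (Real.Gamma s) := by
          rw [← ENNReal.ofReal_mul' hgx, ← ENNReal.ofReal_mul' hΓs.le]
          congr 1
          ring
  -- claim 2 : swap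
  have claim2 : ∫⁻ x in Ioi (0:ℝ), ∫⁻ l in Ioi (0:ℝ),
        ENNReal.ofReal (l ^ (s-1) * Real.exp (-x * l) * g x)
      = ∫⁻ l in Ioi (0:ℝ), ∫⁻ x in Ioi (0:ℝ),
        ENNReal.ofReal (l ^ (s-1) * Real.exp (-x * l) * g x) := by
    refine lintegral_lintegral_swap ?_
    apply Measurable.aemeasurable
    fun_prop
  -- claim 3 : inner integral over x
  have claim3 : ∀ l > (0:ℝ), ∫⁻ x in Ioi (0:ℝ),
        ENNReal.ofReal (l ^ (s-1) * Real.exp (-x * l) * g x)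
      = ENNReal.ofReal (l ^ (s-1) * (1 + K * l ^ α) ^ (-(r + (n:ℝ)))) := by
    intro l hl
    have hls : 0 ≤ l ^ (s-1) := Real.rpow_nonneg hl.le _
    calc ∫⁻ x in Ioi (0:ℝ), ENNReal.ofReal (l ^ (s-1) * Real.exp (-x * l) * g x)
        = ∫⁻ x in Ioi (0:ℝ),
            ENNReal.ofReal (l ^ (s-1)) * ENNReal.ofReal (Real.exp (-l * x) * g x) := by
          refine lintegral_congr fun x => ?_
          rw [← ENNReal.ofReal_mul hls]
          congr 1
          ring_nf
      _ = ENNReal.ofReal (l ^ (s-1)) * ∫⁻ x in Ioi (0:ℝ),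
            ENNReal.ofReal (Real.exp (-l * x) * g x) :=
          lintegral_const_mul' _ _ ENNReal.ofReal_ne_top
      _ = ENNReal.ofReal (l ^ (s-1)) * ENNReal.ofReal ((1 + K * l ^ α) ^ (-(r + (n:ℝ)))) := by
          rw [hlap_lint l hl]
      _ = ENNReal.ofReal (l ^ (s-1) * (1 + K * l ^ α) ^ (-(r + (n:ℝ)))) := by
          rw [← ENNReal.ofReal_mul hls]
  -- claim 4 : outer integral over l
  have hL2 := aux_L2 α K (r + (n:ℝ)) s hα hK hs hR hsR
  have claim4 : ∫⁻ l in Ioi (0:ℝ),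
        ENNReal.ofReal (l ^ (s-1) * (1 + K * l ^ α) ^ (-(r + (n:ℝ))))
      = ENNReal.ofReal (∫ l in Ioi (0:ℝ), l ^ (s-1) * (1 + K * l ^ α) ^ (-(r + (n:ℝ)))) := by
    rw [← ofReal_integral_eq_lintegral_ofReal hL2 ?_]
    filter_upwards [ae_restrict_mem measurableSet_Ioi] with l hl
    have h1 : (0:ℝ) < 1 + K * l ^ α := by nlinarith [Real.rpow_pos_of_pos hl α]
    exact mul_nonneg (Real.rpow_nonneg hl.le _) (Real.rpow_pos_of_pos h1 _).le
  -- the value of the outer integral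
  set J := ∫ l in Ioi (0:ℝ), l ^ (s-1) * (1 + K * l ^ α) ^ (-(r + (n:ℝ))) with hJ_def
  have hJnn : 0 ≤ J := by
    rw [hJ_def]
    apply setIntegral_nonneg measurableSet_Ioi
    intro l hl
    have h1 : (0:ℝ) < 1 + K * l ^ α := by nlinarith [Real.rpow_pos_of_pos hl α]
    exact mul_nonneg (Real.rpow_nonneg (le_of_lt hl) _) (Real.rpow_pos_of_pos h1 _).le
  have hJval : J = α⁻¹ * (K⁻¹^n * (((n-1).factorial:ℝ) / ∏ i ∈ Finset.range n, (r+i))) := by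
    have hJ := aux_subst α K r hα hK (n-1) hr
    have hcast : (((n-1 : ℕ)):ℝ) = (n:ℝ) - 1 := by
      rw [Nat.cast_sub hn]; norm_num
    rw [hcast] at hJ
    rw [Nat.sub_add_cancel hn] at hJ
    simp only [show ((n:ℝ)-1+1) = (n:ℝ) from by ring,
      show r + ((n:ℝ)-1) + 1 = r + (n:ℝ) from by ring] at hJ
    rw [hJ_def, hs_def]
    exact hJ
  -- combine
  have hcomb : L * ENNReal.ofReal (Real.Gamma s) = ENNReal.ofReal J := by
    rw [← claim1, claim2, ← claim4]
    refine setLIntegral_congr_fun measurableSet_Ioi (fun l hl => ?_)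
    exact claim3 l hl
  have hLval : L = ENNReal.ofReal (J / Real.Gamma s) := by
    rw [ENNReal.ofReal_div_of_pos hΓs]
    rw [ENNReal.eq_div_iff (by simp [hΓs.ne']; positivity) ENNReal.ofReal_ne_top, mul_comm]
    exact hcomb
  -- conclude
  have hnnL : 0 ≤ᵐ[volume.restrict (Ioi (0:ℝ))] fun x => x ^ (-s) * g x := by
    filter_upwards [ae_restrict_mem measurableSet_Ioi] with x hx
    exact mul_nonneg (Real.rpow_nonneg hx.le _) (hg_nonneg x hx)
  rw [show -(↑n * α) = -s from by rw [hs_def]]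
  rw [integral_eq_lintegral_of_nonneg_ae hnnL ((by fun_prop : Measurable fun x:ℝ => x ^ (-s) * g x)).aestronglyMeasurable, ← hL_def, hLval,
    ENNReal.toReal_ofReal (div_nonneg hJnn hΓs.le)]
  -- final arithmetic
  rw [hJval]
  have hΓn : Real.Gamma ((n:ℝ) + 1) = (n.factorial : ℝ) := by
    exact_mod_cast Real.Gamma_nat_eq_factorial n
  have hΓs1 : Real.Gamma ((n:ℝ) * α + 1) = s * Real.Gamma s := by
    rw [← hs_def, Real.Gamma_add_one hs.ne']
  rw [hΓn, hΓs1]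
  have hprod : (0:ℝ) < ∏ i ∈ Finset.range n, (r + i) := by
    apply Finset.prod_pos; intro i _; positivity
  have hfact : (n.factorial : ℝ) = (n:ℝ) * ((n-1).factorial : ℝ) := by
    rw [← Nat.mul_factorial_pred (by omega : n ≠ 0)]
    push_cast [Nat.cast_sub hn]
    ring_nf
  rw [hfact, hs_def]
  have hKn : K⁻¹ ^ n = (K ^ n)⁻¹ := by rw [inv_pow]
  rw [hKn]
  field_simp
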